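/- For 0<q<1 and any nonnegative integer s, the q-zeta star value satisfies ζ_q^*[{2}^s] = ∑_{k=1}^∞ ((1+q^k)/[k]_q^{2s}) (-1)^{k-1} q^{k(k-1)/2 + sk}. -/

import Mathlib

open Finset

/-- q-analogue of a natural number: [m]_q = (1-q^m)/(1-q). -/
noncomputable def qnum (q : ℝ) (m : ℕ) : ℝ := (1 - q ^ m) / (1 - q)

/-- q-Pochhammer (q;q)_n = ∏_{k=0}^{n-1} (1 - q^{k+1}). -/
noncomputable def qPoch (q : ℝ) (n : ℕ) : ℝ := ∏ k ∈ Finset.range n, (1 - q ^ (k + 1))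

/-- Gaussian q-binomial coefficient, 0 when m > n. -/
noncomputable def qbinom (q : ℝ) (n m : ℕ) : ℝ :=
  if m ≤ n then qPoch q n / (qPoch q m * qPoch q (n - m)) else 0

/-- q-multiple harmonic star sum H_n^*[s₁,…,s_m]. -/
noncomputable def qHstar (q : ℝ) : List ℕ → ℕ → ℝ
  | [], _ => 1
  | s :: rest, n => ∑ k ∈ Finset.Icc 1 n, q ^ k / qnum q k ^ s * qHstar q rest k

/-- q-multiple zeta star value ζ_q^*[s₁,…,s_m]. -/
noncomputable def qZetaStar (q : ℝ) : List ℕ → ℝ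
  | [] => 1
  | s :: rest => ∑' k : ℕ, q ^ (k + 1) / qnum q (k + 1) ^ s * qHstar q rest (k + 1)

/-- strict multiple harmonic sum ∑_{n ≥ k₁ > … > k_r ≥ 1} ∏ 1/k_j^{p_j}. -/
noncomputable def Hstrict : List ℕ → ℕ → ℝ
  | [], _ => 1
  | p :: rest, n => ∑ k ∈ Finset.Icc 1 n, (1 : ℝ) / (k : ℝ) ^ p * Hstrict rest (k - 1)

/-- binomial-weighted strict multiple harmonic sum Ĥ_n(p). -/
noncomputable def Hhat : List ℕ → ℕ → ℝ
  | [], _ => 1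
  | p :: rest, n => ∑ k ∈ Finset.Icc 1 n,
      ((n.choose k : ℝ) / ((n + k).choose n)) * ((1 : ℝ) / (k : ℝ) ^ p) * Hstrict rest (k - 1)

/-- ordinary multiple harmonic star sum H_n^*(s₁,…,s_m). -/
noncomputable def HstarO : List ℕ → ℕ → ℝ
  | [], _ => 1
  | s :: rest, n => ∑ k ∈ Finset.Icc 1 n, (1 : ℝ) / (k : ℝ) ^ s * HstarO rest k

/-- ordinary multiple zeta star value. -/
noncomputable def zetaStarO : List ℕ → ℝ
  | [] => 1
  | s :: rest => ∑' k : ℕ, (1 : ℝ) / ((k : ℝ) + 1) ^ s * HstarO rest (k + 1)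

/-- Merge a list of parts according to a comma(true)/plus(false) pattern. -/
def mergeComp : ℕ → List ℕ → List Bool → List ℕ
  | a, [], _ => [a]
  | a, _ :: _, [] => [a]
  | a, b :: t, true :: bs => a :: mergeComp b t bs
  | a, b :: t, false :: bs => mergeComp (a + b) t bs

section auxQZeta
open Filter
variable {q : ℝ}

noncomputable def auxB (q : ℝ) (n k : ℕ) : ℝ :=
  if k ≤ n then qPoch q n ^ 2 / (qPoch q (n - k) * qPoch q (n + k)) else 0

noncomputable def auxC (q : ℝ) (s k : ℕ) : ℝ :=
  (-1) ^ (k - 1) * (1 + q ^ k) * q ^ (k * (k - 1) / 2 + s * k) / qnum q k ^ (2 * s)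

lemma qpow_lt_one (hq0 : 0 < q) (hq1 : q < 1) (m : ℕ) (hm : 1 ≤ m) : q ^ m < 1 :=
  pow_lt_one₀ hq0.le hq1 (by omega)

lemma one_sub_pow_pos (hq0 : 0 < q) (hq1 : q < 1) (m : ℕ) (hm : 1 ≤ m) : 0 < 1 - q ^ m := by
  have := qpow_lt_one hq0 hq1 m hm; linarith

lemma qPoch_pos (hq0 : 0 < q) (hq1 : q < 1) (n : ℕ) : 0 < qPoch q n :=
  Finset.prod_pos fun k _ => one_sub_pow_pos hq0 hq1 (k+1) (by omega)

lemma qPoch_le_one (hq0 : 0 < q) (hq1 : q < 1) (n : ℕ) : qPoch q n ≤ 1 :=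
  Finset.prod_le_one (fun k _ => (one_sub_pow_pos hq0 hq1 (k+1) (by omega)).le)
    (fun k _ => by have : 0 < q ^ (k+1) := pow_pos hq0 _; linarith)

lemma qPoch_succ (n : ℕ) : qPoch q (n+1) = qPoch q n * (1 - q ^ (n+1)) :=
  Finset.prod_range_succ _ _

lemma qPoch_add_le (hq0 : 0 < q) (hq1 : q < 1) (m j : ℕ) : qPoch q (m + j) ≤ qPoch q m := by
  induction j with
  | zero => exact le_refl _
  | succ j ih =>
    rw [← Nat.add_assoc, qPoch_succ]
    calc qPoch q (m+j) * (1 - q ^ (m+j+1)) ≤ qPoch q (m+j) * 1 := by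
          apply mul_le_mul_of_nonneg_left _ (qPoch_pos hq0 hq1 _).le
          have : 0 < q ^ (m+j+1) := pow_pos hq0 _; linarith
      _ = qPoch q (m+j) := mul_one _
      _ ≤ qPoch q m := ih

lemma qnum_pos (hq0 : 0 < q) (hq1 : q < 1) (k : ℕ) (hk : 1 ≤ k) : 0 < qnum q k := by
  unfold qnum
  exact div_pos (one_sub_pow_pos hq0 hq1 k hk) (by linarith)

lemma one_le_qnum (hq0 : 0 < q) (hq1 : q < 1) (k : ℕ) (hk : 1 ≤ k) : 1 ≤ qnum q k := by
  unfold qnum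
  rw [le_div_iff₀ (by linarith)]
  have : q ^ k ≤ q ^ 1 := pow_le_pow_of_le_one hq0.le hq1.le hk
  simp only [pow_one] at this; linarith

lemma tele_step (hq0 : 0 < q) (hq1 : q < 1) (k m : ℕ) (hk : 1 ≤ k) (hkm : k ≤ m) :
    q ^ m / qnum q m ^ 2 * auxB q m k
      = q ^ k / qnum q k ^ 2 * (auxB q m k - auxB q (m-1) k) := by
  rcases eq_or_lt_of_le hkm with rfl | hlt
  · have h0 : auxB q (k-1) k = 0 := by unfold auxB; rw [if_neg (by omega)]
    rw [h0, sub_zero]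
  · obtain ⟨t, rfl⟩ : ∃ t, m = k + t + 1 := ⟨m - k - 1, by omega⟩
    have hB1 : auxB q (k+t+1) k
        = (qPoch q (k+t) * (1 - q^(k+t+1)))^2
          / ((qPoch q t * (1 - q^(t+1))) * (qPoch q (2*k+t) * (1 - q^(2*k+t+1)))) := by
      unfold auxB
      rw [if_pos (by omega)]
      have e1 : k + t + 1 - k = t + 1 := by omega
      have e2 : k + t + 1 + k = 2*k + t + 1 := by omega
      rw [e1, e2, qPoch_succ, qPoch_succ, qPoch_succ]
    have hB2 : auxB q (k+t) k = qPoch q (k+t) ^2 / (qPoch q t * qPoch q (2*k+t)) := by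
      unfold auxB; rw [if_pos (by omega)]
      have e1 : k + t - k = t := by omega
      have e2 : k + t + k = 2*k + t := by omega
      rw [e1, e2]
    have hm1 : k + t + 1 - 1 = k + t := by omega
    rw [hm1, hB1, hB2]
    unfold qnum
    have n1 : qPoch q (k+t) ≠ 0 := (qPoch_pos hq0 hq1 _).ne'
    have n2 : qPoch q t ≠ 0 := (qPoch_pos hq0 hq1 _).ne'
    have n3 : qPoch q (2*k+t) ≠ 0 := (qPoch_pos hq0 hq1 _).ne'
    have n4 : (1 : ℝ) - q^(k+t+1) ≠ 0 := (one_sub_pow_pos hq0 hq1 _ (by omega)).ne'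
    have n5 : (1 : ℝ) - q^(t+1) ≠ 0 := (one_sub_pow_pos hq0 hq1 _ (by omega)).ne'
    have n6 : (1 : ℝ) - q^(2*k+t+1) ≠ 0 := (one_sub_pow_pos hq0 hq1 _ (by omega)).ne'
    have n7 : (1 : ℝ) - q^k ≠ 0 := (one_sub_pow_pos hq0 hq1 _ (by omega)).ne'
    have n8 : (1 : ℝ) - q ≠ 0 := by linarith
    field_simp
    ring

lemma auxB_eq_zero (n k : ℕ) (h : n < k) : auxB q n k = 0 := by
  unfold auxB; rw [if_neg (by omega)]

lemma tele_sum (hq0 : 0 < q) (hq1 : q < 1) (k : ℕ) (hk : 1 ≤ k) (n : ℕ) :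
    ∑ m ∈ Icc k n, q ^ m / qnum q m ^ 2 * auxB q m k
      = q ^ k / qnum q k ^ 2 * auxB q n k := by
  induction n with
  | zero =>
    rw [show Icc k 0 = ∅ by rw [Finset.Icc_eq_empty_iff]; omega,
      auxB_eq_zero 0 k (by omega)]
    simp
  | succ n ih =>
    by_cases h : k ≤ n + 1
    · rw [Finset.sum_Icc_succ_top h, ih, tele_step hq0 hq1 k (n+1) hk h]
      have : n + 1 - 1 = n := rfl
      rw [this]; ring
    · rw [show Icc k (n+1) = ∅ by rw [Finset.Icc_eq_empty_iff]; omega,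
        auxB_eq_zero (n+1) k (by omega)]
      simp

lemma tri_succ (k : ℕ) : (k+1) * k / 2 = k * (k-1) / 2 + k := by
  induction k with
  | zero => rfl
  | succ j ih =>
    have h2 : 2 ∣ (j+1)*j := by
      rcases Nat.even_or_odd j with he | ho
      · exact Dvd.dvd.mul_left he.two_dvd _
      · exact Dvd.dvd.mul_right (ho.add_one.two_dvd) _
    obtain ⟨c, hc⟩ := h2
    have h3 : (j+1+1)*(j+1) = (j+1)*j + 2*(j+1) := by ring
    simp only [Nat.add_sub_cancel]
    omega

lemma base_case (hq0 : 0 < q) (hq1 : q < 1) (n : ℕ) (hn : 1 ≤ n) :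
    ∑ k ∈ Icc 1 n, (-1:ℝ)^(k-1) * (1 + q^k) * q^(k*(k-1)/2) * auxB q n k = 1 := by
  have hnz : (1:ℝ) - q^n ≠ 0 := (one_sub_pow_pos hq0 hq1 n hn).ne'
  set w : ℕ → ℝ := fun k => (-1:ℝ)^(k-1) * q^(k*(k-1)/2) * auxB q n k * (1 - q^(n+k)) / (1 - q^n) with hw
  have key : ∀ k, 1 ≤ k → k ≤ n →
      (-1:ℝ)^(k-1) * (1 + q^k) * q^(k*(k-1)/2) * auxB q n k = w k - w (k+1) := by
    intro k hk hkn
    rcases eq_or_lt_of_le hkn with rfl | hlt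
    · -- k = n : w (n+1) = 0
      have h0 : w (k+1) = 0 := by
        simp only [hw, auxB_eq_zero k (k+1) (by omega)]; ring
      rw [h0, sub_zero, hw]
      simp only
      have hB : auxB q k k = qPoch q k ^2 / (qPoch q 0 * qPoch q (k+k)) := by
        unfold auxB; rw [if_pos le_rfl]
        rw [show k - k = 0 from by omega]
      rw [hB]
      have hP0 : qPoch q 0 = 1 := by simp [qPoch]
      rw [hP0]
      have hqkk : q^(k+k) = q^k * q^k := pow_add q k k
      rw [hqkk]
      have n1 : qPoch q (k+k) ≠ 0 := (qPoch_pos hq0 hq1 _).ne'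
      have n2 : qPoch q k ≠ 0 := (qPoch_pos hq0 hq1 _).ne'
      have n7 : (1 : ℝ) - q^k ≠ 0 := (one_sub_pow_pos hq0 hq1 _ (by omega)).ne'
      field_simp
      ring
    · -- k < n
      obtain ⟨t, rfl⟩ : ∃ t, n = k + t + 1 := ⟨n - k - 1, by omega⟩
      simp only [hw, Nat.add_sub_cancel]
      have hL : auxB q (k+t+1) (k+1)
          = qPoch q (k+t+1)^2 / (qPoch q t * (qPoch q (2*k+t+1) * (1 - q^(2*k+t+1+1)))) := by
        unfold auxB; rw [if_pos (by omega)]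
        have e1 : k+t+1-(k+1) = t := by omega
        have e2 : k+t+1+(k+1) = (2*k+t+1)+1 := by omega
        rw [e1, e2, qPoch_succ (2*k+t+1)]
      have hR : auxB q (k+t+1) k
          = qPoch q (k+t+1)^2 / ((qPoch q t * (1 - q^(t+1))) * qPoch q (2*k+t+1)) := by
        unfold auxB; rw [if_pos (by omega)]
        have e3 : k+t+1-k = t+1 := by omega
        have e4 : k+t+1+k = 2*k+t+1 := by omega
        rw [e3, e4, qPoch_succ t]
      have hsign : (-1:ℝ)^k = -(-1:ℝ)^(k-1) := by
        obtain ⟨j, rfl⟩ : ∃ j, k = j+1 := ⟨k-1, by omega⟩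
        simp [pow_succ]
      have hpow : q^((k+1)*k/2) = q^(k*(k-1)/2) * q^k := by
        rw [tri_succ, pow_add]
      have e5 : k+t+1+(k+1) = 2*k+t+1+1 := by omega
      have e6 : k+t+1+k = 2*k+t+1 := by omega
      rw [hL, hR, hsign, hpow, e5, e6]
      have n1 : qPoch q (k+t+1) ≠ 0 := (qPoch_pos hq0 hq1 _).ne'
      have n2 : qPoch q t ≠ 0 := (qPoch_pos hq0 hq1 _).ne'
      have n3 : qPoch q (2*k+t+1) ≠ 0 := (qPoch_pos hq0 hq1 _).ne'
      have n4 : (1:ℝ) - q^(t+1) ≠ 0 := (one_sub_pow_pos hq0 hq1 _ (by omega)).ne'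
      have n5 : (1:ℝ) - q^(2*k+t+1+1) ≠ 0 := (one_sub_pow_pos hq0 hq1 _ (by omega)).ne'
      have n6 : (1:ℝ) - q^(k+t+1) ≠ 0 := (one_sub_pow_pos hq0 hq1 _ (by omega)).ne'
      field_simp
      ring
  -- telescope
  have hsum : ∑ k ∈ Icc 1 n, ((-1:ℝ)^(k-1) * (1 + q^k) * q^(k*(k-1)/2) * auxB q n k)
      = ∑ k ∈ Icc 1 n, (w k - w (k+1)) := by
    apply Finset.sum_congr rfl
    intro k hkmem
    rw [Finset.mem_Icc] at hkmem
    exact key k hkmem.1 hkmem.2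
  rw [hsum]
  have htel : ∑ k ∈ Icc 1 n, (w k - w (k+1)) = w 1 - w (n+1) := by
    rw [← Finset.Ico_add_one_right_eq_Icc, Finset.sum_Ico_eq_sum_range,
      show n + 1 - 1 = n from rfl]
    have hcong : ∀ i, w (1+i) - w (1+i+1) = w (i+1) - w (i+1+1) := by
      intro i; rw [show 1+i = i+1 from by omega]
    rw [Finset.sum_congr rfl (fun i _ => hcong i)]
    exact Finset.sum_range_sub' (fun i => w (i+1)) n
  rw [htel]
  have hw1 : w 1 = 1 := by
    simp only [hw]
    have hB : auxB q n 1 = qPoch q n ^2 / (qPoch q (n-1) * qPoch q (n+1)) := by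
      unfold auxB; rw [if_pos (by omega)]
    obtain ⟨m, rfl⟩ : ∃ m, n = m + 1 := ⟨n - 1, by omega⟩
    rw [hB]
    have e : m + 1 - 1 = m := by omega
    rw [e, qPoch_succ m, qPoch_succ (m+1), qPoch_succ m]
    have n1 : qPoch q m ≠ 0 := (qPoch_pos hq0 hq1 _).ne'
    have n4 : (1:ℝ) - q^(m+1) ≠ 0 := (one_sub_pow_pos hq0 hq1 _ (by omega)).ne'
    have n5 : (1:ℝ) - q^(m+1+1) ≠ 0 := (one_sub_pow_pos hq0 hq1 _ (by omega)).ne'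
    field_simp
    ring
  have hwn : w (n+1) = 0 := by
    simp only [hw, auxB_eq_zero n (n+1) (by omega)]; ring
  rw [hw1, hwn, sub_zero]

lemma finite_identity (hq0 : 0 < q) (hq1 : q < 1) (s : ℕ) :
    ∀ n, 1 ≤ n →
      qHstar q (List.replicate s 2) n = ∑ k ∈ Icc 1 n, auxC q s k * auxB q n k := by
  induction s with
  | zero =>
    intro n hn
    simp only [List.replicate_zero]
    show (1 : ℝ) = _
    rw [← base_case hq0 hq1 n hn]
    apply Finset.sum_congr rfl
    intro k _
    unfold auxC
    simp [mul_comm]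
  | succ s ih =>
    intro n hn
    have hrep : List.replicate (s+1) 2 = 2 :: List.replicate s 2 := rfl
    rw [hrep]
    show ∑ m ∈ Icc 1 n, q ^ m / qnum q m ^ 2 * qHstar q (List.replicate s 2) m = _
    have h1 : ∀ m ∈ Icc 1 n,
        q ^ m / qnum q m ^ 2 * qHstar q (List.replicate s 2) m
        = ∑ k ∈ Icc 1 m, auxC q s k * (q ^ m / qnum q m ^ 2 * auxB q m k) := by
      intro m hm
      rw [Finset.mem_Icc] at hm
      rw [ih m hm.1, Finset.mul_sum]
      apply Finset.sum_congr rfl; intro k _; ring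
    rw [Finset.sum_congr rfl h1]
    rw [Finset.sum_comm' (s' := fun k => Icc k n) (t' := Icc 1 n)
      (fun m k => by simp only [Finset.mem_Icc]; omega)]
    apply Finset.sum_congr rfl
    intro k hk
    rw [Finset.mem_Icc] at hk
    rw [← Finset.mul_sum, tele_sum hq0 hq1 k hk.1 n]
    -- auxC q s k * (q^k/qnum^2 * auxB n k) = auxC q (s+1) k * auxB n k
    unfold auxC
    have hnum : qnum q k ≠ 0 := (qnum_pos hq0 hq1 k hk.1).ne'
    have hpow : q ^ (k*(k-1)/2 + (s+1)*k) = q ^ (k*(k-1)/2 + s*k) * q ^ k := by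
      rw [← pow_add]; ring_nf
    have hnpow : qnum q k ^ (2*(s+1)) = qnum q k ^ (2*s) * qnum q k ^ 2 := by
      rw [← pow_add]; ring_nf
    rw [hpow, hnpow]
    field_simp

lemma geom_partial (hq0 : 0 < q) (hq1 : q < 1) (n : ℕ) :
    ∑ j ∈ range n, q ^ j ≤ (1 - q)⁻¹ := by
  have hs : Summable (fun j : ℕ => q ^ j) := summable_geometric_of_lt_one hq0.le hq1
  calc ∑ j ∈ range n, q ^ j ≤ ∑' j, q ^ j :=
        Summable.sum_le_tsum _ (fun j _ => (pow_pos hq0 j).le) hs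
    _ = (1 - q)⁻¹ := tsum_geometric_of_lt_one hq0.le hq1

-- (a) qHstar bounds

lemma qHstar_nonneg (hq0 : 0 < q) (hq1 : q < 1) (t : ℕ) : ∀ n, 0 ≤ qHstar q (List.replicate t 2) n := by
  induction t with
  | zero => intro n; exact zero_le_one
  | succ t ih =>
    intro n
    show 0 ≤ ∑ k ∈ Icc 1 n, q ^ k / qnum q k ^ 2 * qHstar q (List.replicate t 2) k
    apply Finset.sum_nonneg
    intro k hk
    rw [Finset.mem_Icc] at hk
    exact mul_nonneg (div_nonneg (pow_pos hq0 k).le (pow_nonneg (qnum_pos hq0 hq1 k hk.1).le 2)) (ih k)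

lemma qHstar_le (hq0 : 0 < q) (hq1 : q < 1) (t : ℕ) :
    ∀ n, qHstar q (List.replicate t 2) n ≤ (1 - q)⁻¹ ^ t := by
  induction t with
  | zero => intro n; exact le_refl 1
  | succ t ih =>
    intro n
    have h1q : (0:ℝ) < 1 - q := by linarith
    show ∑ k ∈ Icc 1 n, q ^ k / qnum q k ^ 2 * qHstar q (List.replicate t 2) k ≤ _
    have step : ∀ k ∈ Icc 1 n, q ^ k / qnum q k ^ 2 * qHstar q (List.replicate t 2) k
        ≤ q ^ k * (1 - q)⁻¹ ^ t := by
      intro k hk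
      rw [Finset.mem_Icc] at hk
      have h1 : q ^ k / qnum q k ^ 2 ≤ q ^ k := by
        apply div_le_self (pow_pos hq0 k).le
        exact one_le_pow₀ (one_le_qnum hq0 hq1 k hk.1)
      have h2 : 0 ≤ q ^ k / qnum q k ^ 2 :=
        div_nonneg (pow_pos hq0 k).le (pow_nonneg (qnum_pos hq0 hq1 k hk.1).le 2)
      calc q ^ k / qnum q k ^ 2 * qHstar q (List.replicate t 2) k
          ≤ q ^ k / qnum q k ^ 2 * (1-q)⁻¹ ^ t :=
            mul_le_mul_of_nonneg_left (ih k) h2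
        _ ≤ q ^ k * (1-q)⁻¹ ^ t :=
            mul_le_mul_of_nonneg_right h1 (by positivity)
    calc ∑ k ∈ Icc 1 n, q ^ k / qnum q k ^ 2 * qHstar q (List.replicate t 2) k
        ≤ ∑ k ∈ Icc 1 n, q ^ k * (1-q)⁻¹ ^ t := Finset.sum_le_sum step
      _ = (∑ k ∈ Icc 1 n, q ^ k) * (1-q)⁻¹ ^ t := by rw [Finset.sum_mul]
      _ ≤ (1-q)⁻¹ * (1-q)⁻¹ ^ t := by
          apply mul_le_mul_of_nonneg_right _ (by positivity)
          calc ∑ k ∈ Icc 1 n, q ^ k ≤ ∑ k ∈ range (n+1), q ^ k := by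
                apply Finset.sum_le_sum_of_subset_of_nonneg
                · intro x hx; rw [Finset.mem_Icc] at hx; rw [Finset.mem_range]; omega
                · intro i _ _; exact (pow_pos hq0 i).le
            _ ≤ (1-q)⁻¹ := geom_partial hq0 hq1 (n+1)
      _ = (1-q)⁻¹ ^ (t+1) := by rw [pow_succ]; ring

-- (b) auxC bound

lemma auxC_abs_le (hq0 : 0 < q) (hq1 : q < 1) (s k : ℕ) (hk : 1 ≤ k) :
    |auxC q s k| ≤ 2 * q ^ (k - 1) := by
  unfold auxC
  have hnum := one_le_qnum hq0 hq1 k hk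
  have hE : k - 1 ≤ k * (k - 1) / 2 + s * k := by
    rcases Nat.lt_or_ge k 2 with h | h
    · omega
    · have : 2 * (k-1) ≤ k * (k-1) := Nat.mul_le_mul_right _ h
      have := Nat.div_le_div_right (c := 2) this
      rw [Nat.mul_div_cancel_left _ (by norm_num)] at this
      omega
  have hqE : q ^ (k * (k - 1) / 2 + s * k) ≤ q ^ (k - 1) :=
    pow_le_pow_of_le_one hq0.le hq1.le hE
  rw [abs_div, abs_mul, abs_mul, abs_pow, abs_neg, abs_one, one_pow, one_mul]
  have h1 : |1 + q ^ k| ≤ 2 := by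
    rw [abs_of_pos (by positivity)]
    have : q ^ k ≤ 1 := (pow_le_one₀ hq0.le hq1.le)
    linarith
  have h2 : |q ^ (k * (k - 1) / 2 + s * k)| ≤ q ^ (k-1) := by
    rw [abs_of_pos (pow_pos hq0 _)]; exact hqE
  have h3 : (1:ℝ) ≤ |qnum q k ^ (2*s)| := by
    rw [abs_of_pos (pow_pos (qnum_pos hq0 hq1 k hk) _)]
    exact one_le_pow₀ hnum
  calc |1 + q ^ k| * |q ^ (k * (k - 1) / 2 + s * k)| / |qnum q k ^ (2 * s)|
      ≤ |1 + q ^ k| * |q ^ (k * (k - 1) / 2 + s * k)| :=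
        div_le_self (by positivity) h3
    _ ≤ 2 * q ^ (k-1) := by
        apply mul_le_mul h1 h2 (abs_nonneg _) (by norm_num)

lemma qPoch_lb (hq0 : 0 < q) (hq1 : q < 1) (n : ℕ) :
    Real.exp (-(q / (1 - q) ^ 2)) ≤ qPoch q n := by
  have h1q : (0:ℝ) < 1 - q := by linarith
  have hfac : ∀ j : ℕ, Real.exp (-(q ^ (j+1) / (1 - q))) ≤ 1 - q ^ (j+1) := by
    intro j
    set t := q ^ (j+1) with ht
    have ht0 : 0 < t := pow_pos hq0 _
    have ht1 : t < 1 := by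
      have := one_sub_pow_pos hq0 hq1 (j+1) (by omega); linarith
    have htq : t ≤ q := by
      calc t = q ^ (j+1) := rfl
        _ ≤ q ^ 1 := pow_le_pow_of_le_one hq0.le hq1.le (by omega)
        _ = q := pow_one q
    have hne : (1:ℝ) - t ≠ 0 := by linarith
    have hlog : Real.log (1 - t)⁻¹ ≤ (1-t)⁻¹ - 1 :=
      Real.log_le_sub_one_of_pos (inv_pos.mpr (by linarith))
    have h2 : -(t/(1-q)) ≤ Real.log (1 - t) := by
      rw [Real.log_inv] at hlog
      have he : (1-t)⁻¹ - 1 = t / (1-t) := by field_simp; ring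
      rw [he] at hlog
      have h3 : t / (1-t) ≤ t / (1-q) :=
        div_le_div_of_nonneg_left ht0.le h1q (by linarith)
      linarith
    calc Real.exp (-(t/(1-q))) ≤ Real.exp (Real.log (1-t)) := Real.exp_le_exp.mpr h2
      _ = 1 - t := Real.exp_log (by linarith)
  calc Real.exp (-(q/(1-q)^2))
      ≤ Real.exp (∑ j ∈ range n, -(q ^ (j+1) / (1-q))) := by
        apply Real.exp_le_exp.mpr
        have hneg : ∑ j ∈ range n, -(q ^ (j+1) / (1-q))
            = -∑ j ∈ range n, (q ^ (j+1) / (1-q)) := by simp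
        rw [hneg, neg_le_neg_iff]
        have hg : ∑ j ∈ range n, q ^ (j+1) ≤ q * (1-q)⁻¹ := by
          have hh : ∑ j ∈ range n, q ^ (j+1) = q * ∑ j ∈ range n, q ^ j := by
            rw [Finset.mul_sum]
            exact Finset.sum_congr rfl fun j _ => by rw [pow_succ']
          rw [hh]
          exact mul_le_mul_of_nonneg_left (geom_partial hq0 hq1 n) hq0.le
        calc ∑ j ∈ range n, q ^ (j+1)/(1-q)
            = (∑ j ∈ range n, q ^ (j+1)) * (1-q)⁻¹ := by
              rw [← Finset.sum_div, div_eq_mul_inv]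
          _ ≤ (q * (1-q)⁻¹) * (1-q)⁻¹ :=
              mul_le_mul_of_nonneg_right hg (inv_nonneg.mpr h1q.le)
          _ = q / (1-q)^2 := by
              rw [pow_two]; field_simp
    _ = ∏ j ∈ range n, Real.exp (-(q ^ (j+1) / (1-q))) := Real.exp_sum _ _
    _ ≤ ∏ j ∈ range n, (1 - q ^ (j+1)) := by
        apply Finset.prod_le_prod
        · intro j _; positivity
        · intro j _; exact hfac j
    _ = qPoch q n := rfl

-- (d) difference bound

lemma qPoch_sub_le (hq0 : 0 < q) (hq1 : q < 1) (m j : ℕ) :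
    qPoch q m - qPoch q (m + j) ≤ q ^ (m+1) * (1 - q)⁻¹ := by
  have h1q : (0:ℝ) < 1 - q := by linarith
  have key : qPoch q m - qPoch q (m + j) ≤ ∑ i ∈ range j, q ^ (m+1+i) := by
    induction j with
    | zero => simp
    | succ j ih =>
      rw [← Nat.add_assoc, qPoch_succ (m+j), Finset.sum_range_succ]
      have h1 : qPoch q (m+j) * q ^ (m+j+1) ≤ q ^ (m+1+j) := by
        rw [show m+1+j = m+j+1 from by omega]
        calc qPoch q (m+j) * q ^ (m+j+1) ≤ 1 * q ^ (m+j+1) :=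
            mul_le_mul_of_nonneg_right (qPoch_le_one hq0 hq1 _) (pow_pos hq0 _).le
          _ = q ^ (m+j+1) := one_mul _
      have expand : qPoch q m - qPoch q (m+j) * (1 - q ^ (m+j+1))
          = (qPoch q m - qPoch q (m+j)) + qPoch q (m+j) * q ^ (m+j+1) := by ring
      rw [expand]
      linarith
  calc qPoch q m - qPoch q (m + j) ≤ ∑ i ∈ range j, q ^ (m+1+i) := key
    _ = q ^ (m+1) * ∑ i ∈ range j, q ^ i := by
        rw [Finset.mul_sum]; exact Finset.sum_congr rfl fun i _ => by rw [pow_add]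
    _ ≤ q ^ (m+1) * (1-q)⁻¹ :=
        mul_le_mul_of_nonneg_left (geom_partial hq0 hq1 j) (pow_pos hq0 _).le

-- (e) auxB close to 1

lemma auxB_sub_one (hq0 : 0 < q) (hq1 : q < 1) (n k : ℕ) (hk : 1 ≤ k) (hkn : k ≤ n) :
    |auxB q n k - 1| ≤ q ^ (n - k + 1) * ((1-q)⁻¹ * (Real.exp (-(q / (1 - q) ^ 2)))⁻¹ ^ 2) := by
  have h1q : (0:ℝ) < 1 - q := by linarith
  set E := Real.exp (-(q / (1 - q) ^ 2)) with hE
  have hE0 : 0 < E := Real.exp_pos _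
  set a := qPoch q (n-k) with ha
  set b := qPoch q (n+k) with hb
  set c := qPoch q n with hc
  have ha0 : 0 < a := qPoch_pos hq0 hq1 _
  have hb0 : 0 < b := qPoch_pos hq0 hq1 _
  have hc0 : 0 < c := qPoch_pos hq0 hq1 _
  have ha1 : a ≤ 1 := qPoch_le_one hq0 hq1 _
  have hc1 : c ≤ 1 := qPoch_le_one hq0 hq1 _
  have hEa : E ≤ a := qPoch_lb hq0 hq1 _
  have hEb : E ≤ b := qPoch_lb hq0 hq1 _
  have hca : c ≤ a := by
    have h := qPoch_add_le hq0 hq1 (n-k) k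
    rwa [show n-k+k = n from by omega] at h
  have hbc : b ≤ c := by
    rw [hb, hc]
    exact qPoch_add_le hq0 hq1 _ _
  have hab : a - b ≤ q ^ (n-k+1) * (1-q)⁻¹ := by
    rw [ha, hb, show n + k = (n-k) + (2*k) from by omega]
    exact qPoch_sub_le hq0 hq1 _ _
  have hBval : auxB q n k = c^2 / (a * b) := by
    unfold auxB; rw [if_pos hkn]
  rw [hBval]
  have hnum : |c^2 - a*b| ≤ a - b := by
    rw [abs_le]
    constructor
    · -- -(a-b) ≤ c² - ab  i.e. ab - c² ≤ a - b
      nlinarith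
    · nlinarith
  have hden : E^2 ≤ a * b := by nlinarith
  have heq : c^2/(a*b) - 1 = (c^2 - a*b)/(a*b) := by field_simp
  rw [heq, abs_div, abs_of_pos (by positivity : (0:ℝ) < a*b)]
  calc |c^2 - a*b| / (a*b) ≤ (a - b) / (a*b) := by
        gcongr
    _ ≤ (q ^ (n-k+1) * (1-q)⁻¹) / E^2 := by
        apply div_le_div₀ (by positivity) hab (by positivity) hden
    _ = q ^ (n-k+1) * ((1-q)⁻¹ * E⁻¹^2) := by
        field_simp

lemma Icc_shift (f : ℕ → ℝ) (n : ℕ) : ∑ k ∈ Icc 1 n, f k = ∑ k ∈ range n, f (k+1) := by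
  rw [← Finset.Ico_add_one_right_eq_Icc, Finset.sum_Ico_eq_sum_range, show n+1-1 = n from rfl]
  exact Finset.sum_congr rfl fun i _ => by rw [show 1+i = i+1 from by omega]

lemma summable_auxC (hq0 : 0 < q) (hq1 : q < 1) (s : ℕ) :
    Summable (fun k => auxC q s (k+1)) := by
  apply Summable.of_norm
  apply Summable.of_nonneg_of_le (fun k => norm_nonneg _)
    (fun k => by
      have h := auxC_abs_le hq0 hq1 s (k+1) (by omega)
      simpa [Real.norm_eq_abs] using h)
  exact (summable_geometric_of_lt_one hq0.le hq1).mul_left 2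

lemma tendsto_partial_C (hq0 : 0 < q) (hq1 : q < 1) (s : ℕ) :
    Tendsto (fun n => ∑ k ∈ Icc 1 n, auxC q s k) atTop
      (nhds (∑' k : ℕ, auxC q s (k+1))) := by
  have h := (summable_auxC hq0 hq1 s).hasSum.tendsto_sum_nat
  apply h.congr
  intro n
  exact (Icc_shift (auxC q s) n).symm

lemma tendsto_qHstar (hq0 : 0 < q) (hq1 : q < 1) (s : ℕ) :
    Tendsto (fun n => qHstar q (List.replicate s 2) n) atTop
      (nhds (qZetaStar q (List.replicate s 2))) := by
  cases s with
  | zero =>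
    simp only [List.replicate_zero]
    show Tendsto (fun _ => (1:ℝ)) atTop (nhds 1)
    exact tendsto_const_nhds
  | succ s =>
    have hrep : List.replicate (s+1) 2 = 2 :: List.replicate s 2 := rfl
    rw [hrep]
    set g : ℕ → ℝ := fun k => q ^ k / qnum q k ^ 2 * qHstar q (List.replicate s 2) k with hg
    have hsummable : Summable (fun k => g (k+1)) := by
      apply Summable.of_nonneg_of_le
      · intro k
        exact mul_nonneg (div_nonneg (pow_pos hq0 _).le
          (pow_nonneg (qnum_pos hq0 hq1 (k+1) (by omega)).le 2)) (qHstar_nonneg hq0 hq1 s _)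
      · intro k
        show g (k+1) ≤ (q * (1-q)⁻¹ ^ s) * q ^ k
        have h1 : q ^ (k+1) / qnum q (k+1) ^ 2 ≤ q ^ (k+1) :=
          div_le_self (pow_pos hq0 _).le (one_le_pow₀ (one_le_qnum hq0 hq1 (k+1) (by omega)))
        have h2 : 0 ≤ q ^ (k+1) / qnum q (k+1) ^ 2 := div_nonneg (pow_pos hq0 _).le
          (pow_nonneg (qnum_pos hq0 hq1 (k+1) (by omega)).le 2)
        calc g (k+1) ≤ q ^ (k+1) / qnum q (k+1) ^ 2 * (1-q)⁻¹ ^ s :=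
              mul_le_mul_of_nonneg_left (qHstar_le hq0 hq1 s _) h2
          _ ≤ q ^ (k+1) * (1-q)⁻¹ ^ s := by
              apply mul_le_mul_of_nonneg_right h1
              have : (0:ℝ) < 1 - q := by linarith
              positivity
          _ = (q * (1-q)⁻¹ ^ s) * q ^ k := by rw [pow_succ]; ring
      · exact (summable_geometric_of_lt_one hq0.le hq1).mul_left _
    show Tendsto (fun n => ∑ k ∈ Icc 1 n, g k) atTop (nhds (∑' k : ℕ, g (k+1)))
    have h := hsummable.hasSum.tendsto_sum_nat
    apply h.congr
    intro n
    exact (Icc_shift g n).symm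

lemma tendsto_diff (hq0 : 0 < q) (hq1 : q < 1) (s : ℕ) :
    Tendsto (fun n => ∑ k ∈ Icc 1 n, auxC q s k * (auxB q n k - 1)) atTop (nhds 0) := by
  set K : ℝ := (1-q)⁻¹ * (Real.exp (-(q / (1 - q) ^ 2)))⁻¹ ^ 2 with hK
  have h1q : (0:ℝ) < 1 - q := by linarith
  have hK0 : 0 < K := by positivity
  have hbound : ∀ n : ℕ, ‖∑ k ∈ Icc 1 n, auxC q s k * (auxB q n k - 1)‖
      ≤ (n:ℝ) * (2 * K * q ^ n) := by
    intro n
    have hterm : ∀ k ∈ Icc 1 n, ‖auxC q s k * (auxB q n k - 1)‖ ≤ 2 * K * q ^ n := by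
      intro k hk
      rw [Finset.mem_Icc] at hk
      rw [norm_mul, Real.norm_eq_abs, Real.norm_eq_abs]
      calc |auxC q s k| * |auxB q n k - 1|
          ≤ (2 * q ^ (k-1)) * (q ^ (n-k+1) * K) :=
            mul_le_mul (auxC_abs_le hq0 hq1 s k hk.1)
              (auxB_sub_one hq0 hq1 n k hk.1 hk.2) (abs_nonneg _) (by positivity)
        _ = 2 * K * (q ^ (k-1) * q ^ (n-k+1)) := by ring
        _ = 2 * K * q ^ n := by
            rw [← pow_add, show k-1+(n-k+1) = n from by omega]
    calc ‖∑ k ∈ Icc 1 n, auxC q s k * (auxB q n k - 1)‖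
        ≤ ∑ k ∈ Icc 1 n, ‖auxC q s k * (auxB q n k - 1)‖ := norm_sum_le _ _
      _ ≤ ∑ _k ∈ Icc 1 n, (2 * K * q ^ n) := Finset.sum_le_sum hterm
      _ = (n:ℝ) * (2 * K * q ^ n) := by
          rw [Finset.sum_const, Nat.card_Icc, show n+1-1 = n from rfl, nsmul_eq_mul]
  have htend : Tendsto (fun n : ℕ => (n:ℝ) * (2 * K * q ^ n)) atTop (nhds 0) := by
    have hsum : Summable (fun n : ℕ => (n:ℝ) * (2 * K * q ^ n)) := by
      have h := summable_pow_mul_geometric_of_norm_lt_one (R := ℝ) 1 (r := q)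
        (by rw [Real.norm_eq_abs, abs_of_pos hq0]; exact hq1)
      have h2 := h.mul_left (2*K)
      apply h2.congr
      intro n; simp [pow_one]; ring
    simpa using hsum.tendsto_atTop_zero
  exact squeeze_zero_norm hbound htend

end auxQZeta

theorem stmt9 (q : ℝ) (hq0 : 0 < q) (hq1 : q < 1) (s : ℕ) :
    qZetaStar q (List.replicate s 2)
    = ∑' k : ℕ, (1 + q ^ (k + 1)) / qnum q (k + 1) ^ (2 * s) *
        (-1 : ℝ) ^ k * q ^ ((k + 1) * k / 2 + s * (k + 1)) := by
  have hT1 := tendsto_qHstar hq0 hq1 s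
  have hT2 := tendsto_partial_C hq0 hq1 s
  have hT3 := tendsto_diff hq0 hq1 s
  have hT4 : Filter.Tendsto (fun n => ∑ k ∈ Finset.Icc 1 n, auxC q s k * auxB q n k)
      Filter.atTop (nhds (∑' k : ℕ, auxC q s (k+1))) := by
    have heq : ∀ n : ℕ, ∑ k ∈ Finset.Icc 1 n, auxC q s k * auxB q n k
        = (∑ k ∈ Finset.Icc 1 n, auxC q s k * (auxB q n k - 1))
          + ∑ k ∈ Finset.Icc 1 n, auxC q s k := by
      intro n
      rw [← Finset.sum_add_distrib]
      exact Finset.sum_congr rfl fun k _ => by ring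
    have h := hT3.add hT2
    rw [zero_add] at h
    exact h.congr fun n => (heq n).symm
  have hEv : (fun n => ∑ k ∈ Finset.Icc 1 n, auxC q s k * auxB q n k)
      =ᶠ[Filter.atTop] (fun n => qHstar q (List.replicate s 2) n) := by
    filter_upwards [Filter.eventually_ge_atTop 1] with n hn
    exact (finite_identity hq0 hq1 s n hn).symm
  have hT5 := Filter.Tendsto.congr' hEv hT4
  have hLR : qZetaStar q (List.replicate s 2) = ∑' k : ℕ, auxC q s (k+1) :=
    tendsto_nhds_unique hT1 hT5
  rw [hLR]
  apply tsum_congr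
  intro k
  unfold auxC
  simp only [Nat.add_sub_cancel]
  ring
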